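/- For the strategy φ(x) ≡ 2 in Example 5.1 with v*(0) = 0 and v*(x) = -2 - 2^x for x ≥ 1: the Dubins–Savage martingale condition fails, since E_1^φ[v*(X_n)] = (1/2)^n(-2 - 2^{n+1}) = -(1/2)^{n-1} - 2 → -2 ≠ 0 as n → ∞. -/

import Mathlib

open Filter Topology

/-- Transition kernel of the MDP of Example 5.1 under the stationary strategy `φ(x) ≡ 2`:
`0` is absorbing; from `x ≥ 1` the chain moves to `0` w.p. `1/2` and to `x+1` w.p. `1/2`. -/
noncomputable def qphi2 (x y : ℕ) : ℝ :=
  if x = 0 then (if y = 0 then 1 else 0)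
  else if y = 0 then (1/2 : ℝ)
  else if y = x + 1 then (1/2 : ℝ)
  else 0

/-- `probn q t x y`: probability that the chain with kernel `q` started at `x`
is at `y` at time `t`. -/
noncomputable def probn (q : ℕ → ℕ → ℝ) : ℕ → ℕ → ℕ → ℝ
  | 0, x, y => if y = x then 1 else 0
  | (t+1), x, y => ∑' z : ℕ, probn q t x z * q z y

/-- The optimal value function: `v*(0) = 0`, `v*(x) = -2 - 2^x` for `x ≥ 1`. -/
noncomputable def vstar (x : ℕ) : ℝ := if x = 0 then 0 else -2 - 2^x

lemma probn_formula (n y : ℕ) :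
    probn qphi2 n 1 y =
      if y = n + 1 then (1/2 : ℝ)^n else if y = 0 then 1 - (1/2 : ℝ)^n else 0 := by
  induction n generalizing y with
  | zero =>
    simp [probn]
  | succ n ih =>
    have key : (∑' z : ℕ, probn qphi2 n 1 z * qphi2 z y)
        = ∑ z ∈ ({0, n+1} : Finset ℕ), probn qphi2 n 1 z * qphi2 z y := by
      apply tsum_eq_sum
      intro z hz
      simp only [Finset.mem_insert, Finset.mem_singleton, not_or] at hz
      rw [ih]
      simp [hz.1, hz.2]
    have h01 : (0 : ℕ) ≠ n + 1 := by omega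
    have hn1 : (n + 1 : ℕ) ≠ 0 := by omega
    rw [show probn qphi2 (n+1) 1 y = ∑' z : ℕ, probn qphi2 n 1 z * qphi2 z y from rfl,
      key, Finset.sum_pair h01, ih 0, ih (n+1)]
    by_cases hy0 : y = 0
    · subst hy0
      simp [qphi2, hn1, h01]
      ring
    · by_cases hy : y = n + 1 + 1
      · subst hy
        simp [qphi2, hn1, h01]
        ring
      · simp [qphi2, hn1, h01, hy0, hy]

/-- For `φ(x) ≡ 2` in Example 5.1, the Dubins–Savage martingale condition fails:
`E_1^φ[v*(X_n)] = (1/2)^n (-2 - 2^{n+1}) = -(1/2)^{n-1} - 2 → -2 ≠ 0` as `n → ∞`. -/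
theorem dubins_savage_second_condition_fails :
    (∀ n : ℕ, (∑' y : ℕ, probn qphi2 n 1 y * vstar y)
        = (1/2 : ℝ)^n * (-2 - 2^(n+1)))
      ∧ (∀ n : ℕ, 1 ≤ n →
          (1/2 : ℝ)^n * (-2 - 2^(n+1)) = -(1/2 : ℝ)^(n-1) - 2)
      ∧ Tendsto (fun n : ℕ => ∑' y : ℕ, probn qphi2 n 1 y * vstar y) atTop (𝓝 (-2))
      ∧ (-2 : ℝ) ≠ 0 := by
  have hE : ∀ n : ℕ, (∑' y : ℕ, probn qphi2 n 1 y * vstar y)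
      = (1/2 : ℝ)^n * (-2 - 2^(n+1)) := by
    intro n
    have := tsum_eq_single (L := SummationFilter.unconditional ℕ) (f := fun y : ℕ => probn qphi2 n 1 y * vstar y) (n+1) ?_
    · rw [this, probn_formula]
      simp [vstar]
    · intro b hb
      by_cases hb0 : b = 0
      · simp [hb0, vstar]
      · simp only [probn_formula, vstar, hb, hb0, if_false, zero_mul]
  refine ⟨hE, ?_, ?_, by norm_num⟩
  · intro n hn
    obtain ⟨m, rfl⟩ : ∃ m, n = m + 1 := ⟨n - 1, by omega⟩
    simp only [Nat.add_sub_cancel]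
    field_simp
    have h2 : (1/2:ℝ)^m * 2^m = 1 := by rw [← mul_pow]; norm_num
    linear_combination (-2 : ℝ) * h2
  · have hlim : Tendsto (fun n : ℕ => -(1/2 : ℝ)^(n-1) - 2) atTop (𝓝 (-2)) := by
      have h1 : Tendsto (fun n : ℕ => -(1/2 : ℝ)^(n-1)) atTop (𝓝 0) := by
        have := (tendsto_pow_atTop_nhds_zero_of_lt_one (by norm_num : (0:ℝ) ≤ 1/2)
          (by norm_num : (1/2 : ℝ) < 1)).comp (tendsto_sub_atTop_nat 1)
        simpa [Function.comp] using this.neg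
      simpa using h1.sub_const 2
    apply hlim.congr'
    filter_upwards [eventually_ge_atTop 1] with n hn
    rw [hE n]
    obtain ⟨m, rfl⟩ : ∃ m, n = m + 1 := ⟨n - 1, by omega⟩
    simp only [Nat.add_sub_cancel]
    field_simp
    have h2 : (1/2:ℝ)^m * 2^m = 1 := by rw [← mul_pow]; norm_num
    linear_combination (2 : ℝ) * h2
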